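/- arXiv:1808.02671 — 2 statements merged into one kernel-verified Lean document; each statement's English description precedes it below -/
import Mathlib

section
/- E(η|Z) = 0 P-a.s. if and only if E[η · 1{αᵀZ ≤ t}] = 0 for every α ∈ 𝕊^{p-1} and every t ∈ ℝ. -/
open MeasureTheory Real Complex Set Filter
open scoped RealInnerProductSpace FourierTransform Topology

noncomputable section CWAux

variable {p : ℕ}

private def cw_char (w x : EuclideanSpace ℝ (Fin p)) : ℂ :=
  Complex.exp ((2 * π * ⟪w, x⟫ : ℝ) * Complex.I)

private lemma cw_char_norm (w x : EuclideanSpace ℝ (Fin p)) : ‖cw_char w x‖ = 1 := by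
  simpa [cw_char] using Complex.norm_exp_ofReal_mul_I (2 * π * ⟪w, x⟫)

private lemma cw_char_continuous (w : EuclideanSpace ℝ (Fin p)) :
    Continuous (fun x => cw_char w x) :=
  Complex.continuous_exp.comp ((Complex.continuous_ofReal.comp
    (continuous_const.mul (continuous_const.inner continuous_id))).mul continuous_const)

/-- A smooth compactly supported function is a Schwartz function. -/
private lemma cw_exists_schwartz {g : EuclideanSpace ℝ (Fin p) → ℂ}
    (hg : ContDiff ℝ (⊤ : ℕ∞) g) (hsupp : HasCompactSupport g) :
    ∃ φ : SchwartzMap (EuclideanSpace ℝ (Fin p)) ℂ, ⇑φ = g := by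
  refine ⟨⟨g, hg, fun k n => ?_⟩, rfl⟩
  have h1 : Continuous (iteratedFDeriv ℝ n g) :=
    hg.continuous_iteratedFDeriv (by exact_mod_cast le_top)
  have hcont : Continuous fun x => ‖x‖ ^ k * ‖iteratedFDeriv ℝ n g x‖ :=
    (continuous_norm.pow k).mul h1.norm
  have hcs : HasCompactSupport fun x => ‖x‖ ^ k * ‖iteratedFDeriv ℝ n g x‖ :=
    ((hsupp.iteratedFDeriv n).norm).mul_left
  obtain ⟨C, hC⟩ := hcont.bounded_above_of_compact_support hcs
  exact ⟨C, fun x => le_trans (le_abs_self _) ((Real.norm_eq_abs _) ▸ hC x)⟩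

/-- Fourier step: two finite measures with the same characteristic function integrate
Schwartz functions equally. -/
private lemma cw_integral_schwartz (μ ν : Measure (EuclideanSpace ℝ (Fin p)))
    [IsFiniteMeasure μ] [IsFiniteMeasure ν]
    (hchar : ∀ w, ∫ x, cw_char w x ∂μ = ∫ x, cw_char w x ∂ν)
    (φ : SchwartzMap (EuclideanSpace ℝ (Fin p)) ℂ) :
    ∫ x, φ x ∂μ = ∫ x, φ x ∂ν := by
  set ψ := SchwartzMap.fourierTransformCLM ℂ φ with hψdef
  have hψ : ⇑ψ = 𝓕 ⇑φ := by simp [hψdef]; rfl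
  have hinv : ∀ v, φ v = ∫ w, cw_char w v * ψ w := by
    intro v
    conv_lhs => rw [← Continuous.fourierInv_fourier_eq φ.continuous φ.integrable
      (by rw [← hψ]; exact ψ.integrable)]
    rw [Real.fourierInv_eq']
    simp only [smul_eq_mul, ← hψ, cw_char]
  have key : ∀ (κ : Measure (EuclideanSpace ℝ (Fin p))), IsFiniteMeasure κ →
      ∫ v, φ v ∂κ = ∫ w, (∫ v, cw_char w v ∂κ) * ψ w := by
    intro κ hκ
    have hint : Integrable (Function.uncurry fun (v w : EuclideanSpace ℝ (Fin p)) =>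
        cw_char w v * ψ w) (κ.prod volume) := by
      refine Integrable.mono' (g := fun z => 1 * ‖ψ z.2‖)
        ((integrable_const (1 : ℝ)).mul_prod ψ.integrable.norm) ?_ ?_
      · apply Continuous.aestronglyMeasurable
        have hψc : Continuous ⇑ψ := ψ.continuous
        have hc : Continuous fun z : EuclideanSpace ℝ (Fin p) × EuclideanSpace ℝ (Fin p) =>
            cw_char z.2 z.1 :=
          Complex.continuous_exp.comp ((Complex.continuous_ofReal.comp
            (continuous_const.mul (continuous_snd.inner continuous_fst))).mul continuous_const)
        exact hc.mul (hψc.comp continuous_snd)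
      · refine Eventually.of_forall fun z => ?_
        simp only [Function.uncurry, norm_mul, cw_char_norm, one_mul, one_mul, le_refl]
    calc ∫ v, φ v ∂κ = ∫ v, ∫ w, cw_char w v * ψ w ∂volume ∂κ := by
          simp_rw [← hinv]
      _ = ∫ w, ∫ v, cw_char w v * ψ w ∂κ ∂volume := integral_integral_swap hint
      _ = ∫ w, (∫ v, cw_char w v ∂κ) * ψ w := by
          congr 1; ext w; rw [integral_mul_const]
  rw [key μ inferInstance, key ν inferInstance]
  congr 1; ext w; rw [hchar w]

private lemma cw_measurableSet_orthant (t : Fin p → ℝ) :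
    MeasurableSet {x : EuclideanSpace ℝ (Fin p) | ∀ i, x i ≤ t i} := by
  have h : {x : EuclideanSpace ℝ (Fin p) | ∀ i, x i ≤ t i} =
      ⋂ i, {x : EuclideanSpace ℝ (Fin p) | x i ≤ t i} := by ext; simp
  rw [h]
  refine MeasurableSet.iInter fun i => ?_
  exact measurableSet_le ((EuclideanSpace.proj (𝕜 := ℝ) i).continuous.measurable) measurable_const

/-- From equal integrals of smooth compactly supported real test functions to equality. -/
private lemma cw_ext_of_smooth (μ ν : Measure (EuclideanSpace ℝ (Fin p)))
    [IsFiniteMeasure μ] [IsFiniteMeasure ν]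
    (h : ∀ g : EuclideanSpace ℝ (Fin p) → ℝ, ContDiff ℝ (⊤ : ℕ∞) g → HasCompactSupport g →
      ∫ x, g x ∂μ = ∫ x, g x ∂ν) : μ = ν := by
  have key : ∀ t : Fin p → ℝ,
      μ {x : EuclideanSpace ℝ (Fin p) | ∀ i, x i ≤ t i} =
      ν {x : EuclideanSpace ℝ (Fin p) | ∀ i, x i ≤ t i} := by
    intro t
    set A := {x : EuclideanSpace ℝ (Fin p) | ∀ i, x i ≤ t i} with hA
    have hAm := cw_measurableSet_orthant t
    set χ : ℕ → ContDiffBump (0 : EuclideanSpace ℝ (Fin p)) := fun n =>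
      ⟨n + 1, 2 * (n + 1), by positivity, by nlinarith [Nat.cast_nonneg (α := ℝ) n]⟩ with hχdef
    set g : ℕ → EuclideanSpace ℝ (Fin p) → ℝ := fun n x =>
      (χ n) x * ∏ i, Real.smoothTransition (((n : ℝ) + 1) * (t i + ((n : ℝ) + 1)⁻¹ - x i)) with hgdef
    have hgsmooth : ∀ n, ContDiff ℝ (⊤ : ℕ∞) (g n) := by
      intro n
      refine ((χ n).contDiff).mul (contDiff_prod fun i _ => ?_)
      exact Real.smoothTransition.contDiff.comp
        (contDiff_const.mul (contDiff_const.sub ((EuclideanSpace.proj (𝕜 := ℝ) i).contDiff)))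
    have hgcs : ∀ n, HasCompactSupport (g n) := fun n =>
      ((χ n).hasCompactSupport).mul_right
    have hnonneg : ∀ n x, 0 ≤ g n x := fun n x =>
      mul_nonneg ((χ n).nonneg) (Finset.prod_nonneg fun i _ => Real.smoothTransition.nonneg _)
    have hle : ∀ n x, g n x ≤ 1 := by
      intro n x
      refine mul_le_one₀ ((χ n).le_one) (Finset.prod_nonneg fun i _ =>
        Real.smoothTransition.nonneg _) ?_
      exact Finset.prod_le_one (fun i _ => Real.smoothTransition.nonneg _)
        (fun i _ => Real.smoothTransition.le_one _)
    have hbound : ∀ n, ∀ᵐ x ∂μ, ‖g n x‖ ≤ (1 : ℝ) := by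
      intro n
      refine Eventually.of_forall fun x => ?_
      rw [Real.norm_eq_abs, _root_.abs_of_nonneg (hnonneg n x)]
      exact hle n x
    have hbound' : ∀ n, ∀ᵐ x ∂ν, ‖g n x‖ ≤ (1 : ℝ) := by
      intro n
      refine Eventually.of_forall fun x => ?_
      rw [Real.norm_eq_abs, _root_.abs_of_nonneg (hnonneg n x)]
      exact hle n x
    have htendsto : ∀ x, Tendsto (fun n => g n x) atTop
        (𝓝 (A.indicator (fun _ => (1 : ℝ)) x)) := by
      intro x
      obtain ⟨N, hN⟩ := exists_nat_ge ‖x‖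
      have hev : ∀ᶠ n in atTop, g n x = A.indicator (fun _ => (1 : ℝ)) x := by
        by_cases hx : x ∈ A
        · filter_upwards [eventually_ge_atTop N] with n hn
          have hχ1 : (χ n) x = 1 := by
            apply (χ n).one_of_mem_closedBall
            simp only [Metric.mem_closedBall, dist_zero_right]
            calc ‖x‖ ≤ (N : ℝ) := hN
              _ ≤ (n : ℝ) := by exact_mod_cast hn
              _ ≤ n + 1 := by linarith
          have hprod : ∀ i, Real.smoothTransition (((n : ℝ) + 1) * (t i + ((n : ℝ) + 1)⁻¹ - x i)) = 1 := by
            intro i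
            apply Real.smoothTransition.one_of_one_le
            have h1 : (0 : ℝ) < (n : ℝ) + 1 := by positivity
            have h2 : x i ≤ t i := hx i
            have hinv : ((n : ℝ) + 1) * ((n : ℝ) + 1)⁻¹ = 1 := mul_inv_cancel₀ (ne_of_gt h1)
            have hstep : ((n : ℝ) + 1) * ((n : ℝ) + 1)⁻¹
                ≤ ((n : ℝ) + 1) * (t i + ((n : ℝ) + 1)⁻¹ - x i) :=
              mul_le_mul_of_nonneg_left (by linarith) (le_of_lt h1)
            linarith
          rw [hgdef]
          simp only [hχ1, one_mul]
          rw [Finset.prod_congr rfl fun i _ => hprod i]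
          simp [Set.indicator_of_mem hx]
        · simp only [Set.mem_setOf_eq, hA, not_forall, not_le] at hx
          obtain ⟨i₀, hi₀⟩ := hx
          obtain ⟨M, hM⟩ := exists_nat_gt (x i₀ - t i₀)⁻¹
          filter_upwards [eventually_ge_atTop M] with n hn
          have hzero : Real.smoothTransition (((n : ℝ) + 1) * (t i₀ + ((n : ℝ) + 1)⁻¹ - x i₀)) = 0 := by
            apply Real.smoothTransition.zero_of_nonpos
            have h1 : (0 : ℝ) < (n : ℝ) + 1 := by positivity
            have h2 : ((n : ℝ) + 1)⁻¹ ≤ x i₀ - t i₀ := by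
              have hpos : (0 : ℝ) < x i₀ - t i₀ := by linarith
              rw [inv_le_comm₀ h1 hpos]
              calc (x i₀ - t i₀)⁻¹ ≤ (M : ℝ) := le_of_lt hM
                _ ≤ (n : ℝ) := by exact_mod_cast hn
                _ ≤ (n : ℝ) + 1 := by linarith
            apply mul_nonpos_of_nonneg_of_nonpos (le_of_lt h1)
            linarith
          have hxA : x ∉ A := by
            rw [hA]; simp only [Set.mem_setOf_eq, not_forall, not_le]; exact ⟨i₀, hi₀⟩
          rw [hgdef]
          simp only [Set.indicator_of_notMem hxA]
          rw [Finset.prod_eq_zero (Finset.mem_univ i₀) hzero, mul_zero]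
      exact tendsto_const_nhds.congr' (hev.mono fun n hn => hn.symm)
    have hμlim : Tendsto (fun n => ∫ x, g n x ∂μ) atTop
        (𝓝 (∫ x, A.indicator (fun _ => (1 : ℝ)) x ∂μ)) := by
      refine tendsto_integral_of_dominated_convergence (fun _ => (1 : ℝ))
        (fun n => (hgsmooth n).continuous.aestronglyMeasurable)
        (integrable_const 1) hbound ?_
      exact Eventually.of_forall htendsto
    have hνlim : Tendsto (fun n => ∫ x, g n x ∂ν) atTop
        (𝓝 (∫ x, A.indicator (fun _ => (1 : ℝ)) x ∂ν)) := by
      refine tendsto_integral_of_dominated_convergence (fun _ => (1 : ℝ))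
        (fun n => (hgsmooth n).continuous.aestronglyMeasurable)
        (integrable_const 1) hbound' ?_
      exact Eventually.of_forall htendsto
    have heq : ∀ n, ∫ x, g n x ∂μ = ∫ x, g n x ∂ν := fun n => h _ (hgsmooth n) (hgcs n)
    have hlim : ∫ x, A.indicator (fun _ => (1 : ℝ)) x ∂μ
        = ∫ x, A.indicator (fun _ => (1 : ℝ)) x ∂ν := by
      refine tendsto_nhds_unique ?_ hνlim
      simpa only [heq] using hμlim
    rw [integral_indicator hAm, integral_indicator hAm] at hlim
    simp only [setIntegral_const, smul_eq_mul, mul_one] at hlim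
    exact (ENNReal.toReal_eq_toReal_iff' (measure_ne_top μ A) (measure_ne_top ν A)).mp hlim
  -- mass equality via an increasing union of orthants
  have hunion : (⋃ n : ℕ, {x : EuclideanSpace ℝ (Fin p) | ∀ i, x i ≤ (n : ℝ)}) = univ := by
    ext x
    simp only [Set.mem_iUnion, Set.mem_setOf_eq, Set.mem_univ, iff_true]
    obtain ⟨n, hn⟩ := exists_nat_ge (∑ j, |x j|)
    refine ⟨n, fun i => ?_⟩
    calc x i ≤ |x i| := le_abs_self _
      _ ≤ ∑ j, |x j| := Finset.single_le_sum (f := fun j => |x j|) (fun j _ => abs_nonneg _) (Finset.mem_univ i)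
      _ ≤ n := hn
  have hmono : Monotone (fun n : ℕ => {x : EuclideanSpace ℝ (Fin p) | ∀ i, x i ≤ (n : ℝ)}) := by
    intro a b hab x hx i
    exact le_trans (hx i) (by exact_mod_cast hab : (a : ℝ) ≤ b)
  have huniv : μ univ = ν univ := by
    have h1 := tendsto_measure_iUnion_atTop (μ := μ) hmono
    have h2 := tendsto_measure_iUnion_atTop (μ := ν) hmono
    rw [hunion] at h1 h2
    refine tendsto_nhds_unique ?_ h2
    exact h1.congr fun n => key fun _ => (n : ℝ)
  refine MeasureTheory.ext_of_generate_finite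
    ((WithLp.ofLp ⁻¹' ·) '' (Set.pi univ '' Set.pi univ fun _ : Fin p => Set.range (Set.Iic : ℝ → Set ℝ))) ?_ ?_ ?_ huniv
  · change MeasurableSpace.comap WithLp.ofLp _ = _
    rw [← MeasurableSpace.comap_generateFrom]
    congr 1
    refine Eq.symm (generateFrom_eq_pi (fun i => ?_) (fun i => ?_))
    · rw [Real.measurableSpace.eq_1]
      exact (borel_eq_generateFrom_Iic ℝ).symm
    · exact ⟨fun n => Set.Iic n, fun n => ⟨n, rfl⟩, by
        ext x
        simp only [Set.mem_iUnion, Set.mem_Iic, Set.mem_univ, iff_true]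
        exact exists_nat_ge x⟩
  · exact (IsPiSystem.pi fun i => isPiSystem_Iic).comap _
  · rintro s ⟨_, ⟨f, hf, rfl⟩, rfl⟩
    choose u hu using fun i => hf i (Set.mem_univ i)
    have hs : WithLp.ofLp ⁻¹' Set.pi univ f = {x : EuclideanSpace ℝ (Fin p) | ∀ i, x i ≤ u i} := by
      ext x
      simp only [Set.mem_preimage, Set.mem_pi, Set.mem_univ, forall_true_left, Set.mem_setOf_eq]
      exact forall_congr' fun i => by rw [← hu i, Set.mem_Iic]
    beta_reduce
    rw [hs]
    exact key u

/-- Cramér–Wold: finite measures with equal one-dimensional projections are equal. -/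
private lemma cw_main (μ ν : Measure (EuclideanSpace ℝ (Fin p)))
    [IsFiniteMeasure μ] [IsFiniteMeasure ν]
    (h : ∀ α : EuclideanSpace ℝ (Fin p),
      μ.map (fun x => ⟪α, x⟫) = ν.map (fun x => ⟪α, x⟫)) : μ = ν := by
  have hchar : ∀ w, ∫ x, cw_char w x ∂μ = ∫ x, cw_char w x ∂ν := by
    intro w
    have hm : Measurable fun x : EuclideanSpace ℝ (Fin p) => ⟪w, x⟫ :=
      (continuous_const.inner continuous_id).measurable
    have hcont : Continuous fun s : ℝ => Complex.exp ((2 * π * s : ℝ) * Complex.I) :=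
      Complex.continuous_exp.comp ((Complex.continuous_ofReal.comp
        (continuous_const.mul continuous_id)).mul continuous_const)
    have h1 : ∫ x, cw_char w x ∂μ
        = ∫ s, Complex.exp ((2 * π * s : ℝ) * Complex.I) ∂(μ.map fun x => ⟪w, x⟫) := by
      rw [integral_map hm.aemeasurable hcont.aestronglyMeasurable]
      rfl
    have h2 : ∫ x, cw_char w x ∂ν
        = ∫ s, Complex.exp ((2 * π * s : ℝ) * Complex.I) ∂(ν.map fun x => ⟪w, x⟫) := by
      rw [integral_map hm.aemeasurable hcont.aestronglyMeasurable]
      rfl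
    rw [h1, h2, h w]
  apply cw_ext_of_smooth
  intro g hg hgc
  have hgc' : HasCompactSupport (fun x => ((g x : ℝ) : ℂ)) :=
    hgc.comp_left (g := fun r : ℝ => (r : ℂ)) (by simp)
  have hg' : ContDiff ℝ (⊤ : ℕ∞) (fun x => ((g x : ℝ) : ℂ)) :=
    Complex.ofRealCLM.contDiff.comp hg
  obtain ⟨φ, hφ⟩ := cw_exists_schwartz hg' hgc'
  have hint := cw_integral_schwartz μ ν hchar φ
  rw [hφ] at hint
  have hip : Integrable (fun x => ((g x : ℝ) : ℂ)) μ :=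
    (Complex.continuous_ofReal.comp hg.continuous).integrable_of_hasCompactSupport hgc'
  have hiq : Integrable (fun x => ((g x : ℝ) : ℂ)) ν :=
    (Complex.continuous_ofReal.comp hg.continuous).integrable_of_hasCompactSupport hgc'
  have e1 := Complex.reCLM.integral_comp_comm hip
  have e2 := Complex.reCLM.integral_comp_comm hiq
  simp only [Complex.reCLM_apply, Complex.ofReal_re] at e1 e2
  rw [e1, e2]
  exact congrArg Complex.re hint

end CWAux

/-- `E(η|Z) = 0` a.s. iff `E[η · 1{αᵀZ ≤ t}] = 0` for every unit vector `α ∈ 𝕊^{p-1}`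
and every `t ∈ ℝ`. -/
theorem stmt5 {Ω : Type*} [MeasurableSpace Ω] (P : Measure Ω) [IsProbabilityMeasure P]
    (p : ℕ) (hp : 1 ≤ p) (Z : Ω → EuclideanSpace ℝ (Fin p)) (hZ : Measurable Z)
    (η : Ω → ℝ) (hη : Integrable η P) :
    P[η | MeasurableSpace.comap Z inferInstance] =ᵐ[P] 0 ↔
      ∀ α : EuclideanSpace ℝ (Fin p), ‖α‖ = 1 → ∀ t : ℝ,
        ∫ ω, η ω * (if ⟪α, Z ω⟫ ≤ t then (1 : ℝ) else 0) ∂P = 0 := by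
  have hm : MeasurableSpace.comap Z inferInstance ≤ ‹MeasurableSpace Ω› := hZ.comap_le
  haveI : IsFiniteMeasure (P.trim hm) := isFiniteMeasure_trim hm
  have hHmeas : ∀ (α : EuclideanSpace ℝ (Fin p)) (t : ℝ),
      MeasurableSet {x : EuclideanSpace ℝ (Fin p) | ⟪α, x⟫ ≤ t} := fun α t =>
    measurableSet_le ((continuous_const.inner continuous_id).measurable) measurable_const
  have hind : ∀ (α : EuclideanSpace ℝ (Fin p)) (t : ℝ),
      (fun ω => η ω * (if ⟪α, Z ω⟫ ≤ t then (1 : ℝ) else 0))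
        = fun ω => (Z ⁻¹' {x | ⟪α, x⟫ ≤ t}).indicator η ω := by
    intro α t
    funext ω
    by_cases hω : ⟪α, Z ω⟫ ≤ t
    · simp [Set.indicator, hω]
    · simp [Set.indicator, hω]
  constructor
  · intro hce α hα t
    rw [hind α t, integral_indicator (hZ (hHmeas α t)),
      ← setIntegral_condExp hm hη ⟨_, hHmeas α t, rfl⟩]
    calc ∫ ω in Z ⁻¹' {x | ⟪α, x⟫ ≤ t}, (P[η|MeasurableSpace.comap Z inferInstance]) ω ∂P
        = ∫ ω in Z ⁻¹' {x | ⟪α, x⟫ ≤ t}, (0 : ℝ) ∂P :=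
          integral_congr_ae (ae_restrict_of_ae hce)
      _ = 0 := by simp
  · intro hint
    set νp := (P.withDensity fun ω => ENNReal.ofReal (η ω)).map Z with hνp
    set νm := (P.withDensity fun ω => ENNReal.ofReal (-η ω)).map Z with hνm
    haveI hfp : IsFiniteMeasure (P.withDensity fun ω => ENNReal.ofReal (η ω)) :=
      isFiniteMeasure_withDensity_ofReal hη.2
    haveI hfm : IsFiniteMeasure (P.withDensity fun ω => ENNReal.ofReal (-η ω)) :=
      isFiniteMeasure_withDensity_ofReal hη.neg.2
    haveI : IsFiniteMeasure νp := by
      refine ⟨?_⟩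
      rw [hνp, Measure.map_apply hZ MeasurableSet.univ]
      exact measure_lt_top _ _
    haveI : IsFiniteMeasure νm := by
      refine ⟨?_⟩
      rw [hνm, Measure.map_apply hZ MeasurableSet.univ]
      exact measure_lt_top _ _
    have hset : ∀ A : Set (EuclideanSpace ℝ (Fin p)), MeasurableSet A →
        ∫ ω in Z ⁻¹' A, η ω ∂P = (νp A).toReal - (νm A).toReal := by
      intro A hA
      rw [hνp, hνm, Measure.map_apply hZ hA, Measure.map_apply hZ hA,
        withDensity_apply _ (hZ hA), withDensity_apply _ (hZ hA)]
      exact integral_eq_lintegral_pos_part_sub_lintegral_neg_part hη.restrict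
    have hhalf : ∀ α : EuclideanSpace ℝ (Fin p), ‖α‖ = 1 → ∀ t : ℝ,
        νp {x | ⟪α, x⟫ ≤ t} = νm {x | ⟪α, x⟫ ≤ t} := by
      intro α hα t
      have h0 := hint α hα t
      rw [hind α t, integral_indicator (hZ (hHmeas α t)), hset _ (hHmeas α t),
        sub_eq_zero] at h0
      exact (ENNReal.toReal_eq_toReal_iff' (measure_ne_top _ _) (measure_ne_top _ _)).mp h0
    -- mass equality
    have hu₀ : ‖(EuclideanSpace.single (⟨0, hp⟩ : Fin p) (1 : ℝ))‖ = 1 := by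
      rw [EuclideanSpace.norm_single]
      norm_num
    have hmass : νp Set.univ = νm Set.univ := by
      set u₀ := EuclideanSpace.single (⟨0, hp⟩ : Fin p) (1 : ℝ) with hu₀def
      have hunion : (⋃ n : ℕ, {x : EuclideanSpace ℝ (Fin p) | ⟪u₀, x⟫ ≤ (n : ℝ)}) = univ := by
        ext x
        simp only [Set.mem_iUnion, Set.mem_setOf_eq, Set.mem_univ, iff_true]
        exact exists_nat_ge _
      have hmono : Monotone fun n : ℕ => {x : EuclideanSpace ℝ (Fin p) | ⟪u₀, x⟫ ≤ (n : ℝ)} := by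
        intro a b hab x hx
        simp only [Set.mem_setOf_eq] at hx ⊢
        exact le_trans hx (by exact_mod_cast hab)
      have h1 := tendsto_measure_iUnion_atTop (μ := νp) hmono
      have h2 := tendsto_measure_iUnion_atTop (μ := νm) hmono
      rw [hunion] at h1 h2
      refine tendsto_nhds_unique ?_ h2
      exact h1.congr fun n => hhalf u₀ hu₀ n
    -- maps equal for every direction
    have hmap : ∀ α : EuclideanSpace ℝ (Fin p),
        νp.map (fun x => ⟪α, x⟫) = νm.map (fun x => ⟪α, x⟫) := by
      intro α
      by_cases hα : α = 0
      · subst hα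
        have hz : (fun x : EuclideanSpace ℝ (Fin p) => ⟪(0 : EuclideanSpace ℝ (Fin p)), x⟫)
            = fun _ => (0 : ℝ) := by
          funext x; exact inner_zero_left x
        rw [hz, Measure.map_const, Measure.map_const, hmass]
      · have hnorm : (0 : ℝ) < ‖α‖ := norm_pos_iff.mpr hα
        have hmeas : Measurable fun x : EuclideanSpace ℝ (Fin p) => ⟪α, x⟫ :=
          (continuous_const.inner continuous_id).measurable
        haveI : IsFiniteMeasure (νp.map fun x : EuclideanSpace ℝ (Fin p) => ⟪α, x⟫) := by
          refine ⟨?_⟩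
          rw [Measure.map_apply hmeas MeasurableSet.univ]
          exact measure_lt_top _ _
        haveI : IsFiniteMeasure (νm.map fun x : EuclideanSpace ℝ (Fin p) => ⟪α, x⟫) := by
          refine ⟨?_⟩
          rw [Measure.map_apply hmeas MeasurableSet.univ]
          exact measure_lt_top _ _
        refine Measure.ext_of_Iic _ _ fun t => ?_
        rw [Measure.map_apply hmeas measurableSet_Iic, Measure.map_apply hmeas measurableSet_Iic]
        have hsetEq : (fun x : EuclideanSpace ℝ (Fin p) => ⟪α, x⟫) ⁻¹' Set.Iic t
            = {x : EuclideanSpace ℝ (Fin p) | ⟪(‖α‖⁻¹ • α : EuclideanSpace ℝ (Fin p)), x⟫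
                ≤ ‖α‖⁻¹ * t} := by
          ext x
          simp only [Set.mem_preimage, Set.mem_Iic, Set.mem_setOf_eq, real_inner_smul_left]
          exact (mul_le_mul_iff_right₀ (inv_pos.mpr hnorm)).symm
        have hunit : ‖(‖α‖⁻¹ • α : EuclideanSpace ℝ (Fin p))‖ = 1 := by
          rw [norm_smul, norm_inv, norm_norm]
          field_simp
        rw [hsetEq]
        exact hhalf _ hunit _
    have hνeq : νp = νm := cw_main νp νm hmap
    have hzero : ∀ A : Set (EuclideanSpace ℝ (Fin p)), MeasurableSet A →
        ∫ ω in Z ⁻¹' A, η ω ∂P = 0 := by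
      intro A hA
      rw [hset A hA, hνeq, sub_self]
    refine ae_eq_zero_of_forall_setIntegral_eq_of_finStronglyMeasurable_trim hm
      (fun s hs _ => integrable_condExp.integrableOn) ?_
      (stronglyMeasurable_condExp.finStronglyMeasurable _)
    rintro s ⟨A, hA, rfl⟩ -
    rw [setIntegral_condExp hm hη ⟨A, hA, rfl⟩]
    exact hzero A hA
end

section
/- Let X : Ω → ℝ^q and T : Ω → ℝ be random elements with E‖X‖² < ∞, let ε : Ω → ℝ satisfy E(ε²) < ∞ and E(ε | X, T) = 0 P-a.s. (conditional expectation given the σ-algebra generated by the pair (X, T)), let β ∈ ℝ^q, let g : ℝ → ℝ be Borel measurable with E[g(T)²] < ∞, and set Y := βᵀX + g(T) + ε. Define X̃ := X − E(X|T) (conditional expectation taken componentwise given the σ-algebra generated by T) and Ỹ := Y − E(Y|T). Then E[X̃ Ỹ] = E[X̃ X̃ᵀ] β; in particular, if the q×q matrix E[X̃ X̃ᵀ] is invertible, then β = (E[X̃ X̃ᵀ])⁻¹ E[X̃ Ỹ]. -/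
open MeasureTheory
open scoped RealInnerProductSpace ENNReal

lemma memL2_condexp {α : Type*} {m : MeasurableSpace α} [m0 : MeasurableSpace α]
    {μ : Measure α} [IsProbabilityMeasure μ] (hm : m ≤ m0) {f : α → ℝ} (hf : MemLp f 2 μ) :
    MemLp (μ[f|m]) 2 μ := by
  haveI : SigmaFinite (μ.trim hm) := by infer_instance
  have hfi : Integrable f μ := hf.integrable (by norm_num)
  set fL : Lp ℝ 2 μ := hf.toLp f with hfL
  set G : Lp ℝ 2 μ := ↑(condExpL2 ℝ ℝ hm fL) with hG
  have hGint : Integrable (⇑G) μ := integrable_condExpL2_of_isFiniteMeasure (𝕜 := ℝ) hm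
  have key : ⇑G =ᵐ[μ] μ[f|m] := by
    refine ae_eq_condExp_of_forall_setIntegral_eq hm hfi ?_ ?_ ?_
    · intro s hs hμs
      exact hGint.integrableOn
    · intro s hs hμs
      have h1 : ∫ x in s, G x ∂μ = ∫ x in s, fL x ∂μ :=
        integral_condExpL2_eq (𝕜 := ℝ) hm fL hs hμs.ne
      rw [h1]
      exact setIntegral_congr_ae (hm s hs) ((hf.coeFn_toLp).mono fun x hx _ => hx)
    · exact aestronglyMeasurable_condExpL2 (𝕜 := ℝ) hm fL
  exact (Lp.memLp G).ae_eq key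

lemma integrable_mul_L2 {α : Type*} [m0 : MeasurableSpace α] {μ : Measure α}
    {f g : α → ℝ} (hf : MemLp f 2 μ) (hg : MemLp g 2 μ) :
    Integrable (fun ω => f ω * g ω) μ := by
  have h : MemLp (f • g) 1 μ := hg.smul hf (hpqr := ⟨by simp [ENNReal.inv_two_add_inv_two, one_div]⟩)
  exact memLp_one_iff_integrable.mp h

/-- Population moment identity for the partial linear model `Y = βᵀX + g(T) + ε`:
with `X̃ = X − E(X|T)` and `Ỹ = Y − E(Y|T)`, one has `E[X̃ Ỹ] = E[X̃ X̃ᵀ] β`;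
in particular, if `E[X̃ X̃ᵀ]` is invertible then `β = (E[X̃ X̃ᵀ])⁻¹ E[X̃ Ỹ]`. -/
theorem stmt15 {Ω : Type*} [MeasurableSpace Ω] (P : Measure Ω) [IsProbabilityMeasure P]
    (q : ℕ) (hq : 1 ≤ q)
    (X : Ω → EuclideanSpace ℝ (Fin q)) (hXmeas : Measurable X) (hX2 : MemLp X 2 P)
    (T : Ω → ℝ) (hT : Measurable T)
    (ε : Ω → ℝ) (hεmeas : Measurable ε) (hε2 : MemLp ε 2 P)
    (hεcond : P[ε | MeasurableSpace.comap (fun ω => (X ω, T ω)) inferInstance] =ᵐ[P] 0)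
    (β : EuclideanSpace ℝ (Fin q))
    (g : ℝ → ℝ) (hg : Measurable g) (hg2 : MemLp (fun ω => g (T ω)) 2 P)
    (Y : Ω → ℝ) (hY : Y = fun ω => ⟪β, X ω⟫ + g (T ω) + ε ω)
    (mT : MeasurableSpace Ω) (hmT : mT = MeasurableSpace.comap T inferInstance)
    (Xt : Fin q → Ω → ℝ)
    (hXt : ∀ i, Xt i = fun ω => X ω i - (P[(fun ω' => X ω' i) | mT]) ω)
    (Yt : Ω → ℝ) (hYt : Yt = fun ω => Y ω - (P[Y | mT]) ω)
    (M : Matrix (Fin q) (Fin q) ℝ)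
    (hM : M = Matrix.of fun i j => ∫ ω, Xt i ω * Xt j ω ∂P)
    (v : Fin q → ℝ) (hv : v = fun i => ∫ ω, Xt i ω * Yt ω ∂P) :
    v = M.mulVec (fun j => β j) ∧
      (IsUnit M → (fun j => β j) = M⁻¹.mulVec v) := by
  rename_i instΩ instP
  have one_le_two : (1 : ℝ≥0∞) ≤ 2 := by norm_num
  set mXT : MeasurableSpace Ω :=
    MeasurableSpace.comap (fun ω => (X ω, T ω)) inferInstance with hmXT
  letI m0 : MeasurableSpace Ω := instΩ
  have hpairm : Measurable (fun ω => (X ω, T ω)) := hXmeas.prodMk hT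
  have hmXT_le : mXT ≤ m0 := hpairm.comap_le
  have hmT_le : mT ≤ m0 := hmT ▸ hT.comap_le
  have hmT_le_XT : mT ≤ mXT := by
    rw [hmT]
    have hT' : T = Prod.snd ∘ (fun ω => (X ω, T ω)) := rfl
    calc MeasurableSpace.comap T inferInstance
        = MeasurableSpace.comap (fun ω => (X ω, T ω))
            (MeasurableSpace.comap Prod.snd inferInstance) := by
          rw [MeasurableSpace.comap_comp, ← hT']
      _ ≤ mXT := MeasurableSpace.comap_mono measurable_snd.comap_le
  haveI hsfT : SigmaFinite (P.trim hmT_le) := by infer_instance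
  haveI hsfXT : SigmaFinite (P.trim hmXT_le) := by infer_instance
  -- E[ε | T] = 0 a.s. (tower property)
  have hεT : P[ε|mT] =ᵐ[P] 0 := by
    calc P[ε|mT] =ᵐ[P] P[P[ε|mXT]|mT] := (condExp_condExp_of_le hmT_le_XT hmXT_le).symm
      _ =ᵐ[P] P[(0 : Ω → ℝ)|mT] := condExp_congr_ae hεcond
      _ =ᵐ[P] 0 := by rw [condExp_zero]
  -- components of X
  have hXi2 : ∀ i, MemLp (fun ω => X ω i) 2 P := fun i => by
    have h := (EuclideanSpace.proj (𝕜 := ℝ) i).comp_memLp' hX2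
    exact h
  have hcXi2 : ∀ i, MemLp (P[(fun ω' => X ω' i)|mT]) 2 P :=
    fun i => memL2_condexp hmT_le (hXi2 i)
  have hXt2 : ∀ i, MemLp (Xt i) 2 P := fun i => by
    rw [hXt i]; exact (hXi2 i).sub (hcXi2 i)
  have hinner : ∀ ω, ⟪β, X ω⟫ = ∑ j, β j * X ω j := fun ω => by
    simp [PiLp.inner_apply, RCLike.inner_apply, conj_trivial, mul_comm]
  have hβX2 : MemLp (fun ω => ⟪β, X ω⟫) 2 P := hX2.const_inner β
  -- conditional expectation of the inner product part
  have hsum_ce : P[(fun ω => ⟪β, X ω⟫)|mT]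
      =ᵐ[P] fun ω => ∑ j, β j * (P[(fun ω' => X ω' j)|mT]) ω := by
    have hrw : (fun ω => ⟪β, X ω⟫) = ∑ j : Fin q, (β j) • (fun ω' => X ω' j) := by
      funext ω
      simp [hinner ω, Finset.sum_apply]
    rw [hrw]
    have h1 := condExp_finsetSum (μ := P) (m := mT) (s := Finset.univ)
      (f := fun j : Fin q => (β j) • (fun ω' => X ω' j))
      (fun j _ => (Integrable.smul (β j) ((hXi2 j).integrable one_le_two)))
    refine h1.trans ?_
    have h2 : ∀ᵐ ω ∂P, ∀ j : Fin q,
        (P[(β j) • (fun ω' => X ω' j)|mT]) ω = β j * (P[(fun ω' => X ω' j)|mT]) ω := by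
      rw [ae_all_iff]
      intro j
      filter_upwards [condExp_smul (μ := P) (m := mT) (β j) (fun ω' => X ω' j)] with ω hω
      simpa using hω
    filter_upwards [h2] with ω hω
    simp only [Finset.sum_apply]
    exact Finset.sum_congr rfl fun j _ => hω j
  -- g(T) is mT-measurable
  have hTmT : Measurable[mT] T := by
    rw [hmT]; exact Measurable.of_comap_le le_rfl
  have hgT_ce : P[(fun ω => g (T ω))|mT] = fun ω => g (T ω) :=
    condExp_of_stronglyMeasurable hmT_le ((hg.comp hTmT).stronglyMeasurable)
      (hg2.integrable one_le_two)
  -- conditional expectation of Y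
  have hYce : P[Y|mT] =ᵐ[P]
      fun ω => (∑ j, β j * (P[(fun ω' => X ω' j)|mT]) ω) + g (T ω) := by
    have hYsplit : Y = ((fun ω => ⟪β, X ω⟫) + fun ω => g (T ω)) + ε := by
      rw [hY]; rfl
    rw [hYsplit]
    have hA := condExp_add (μ := P) (m := mT)
      ((hβX2.add hg2).integrable one_le_two) (hε2.integrable one_le_two)
    have hB := condExp_add (μ := P) (m := mT)
      (hβX2.integrable one_le_two) (hg2.integrable one_le_two)
    filter_upwards [hA, hB, hsum_ce, hεT] with ω h1 h2 h3 h4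
    simp only [Pi.add_apply] at h1 h2
    rw [h1, h2, h3, h4, hgT_ce]
    simp
  -- a.e. decomposition of Yt
  have hYt_ae : Yt =ᵐ[P] fun ω => (∑ j, β j * Xt j ω) + ε ω := by
    rw [hYt]
    filter_upwards [hYce] with ω h1
    rw [h1, hY]
    simp only [hinner ω, hXt, mul_sub, Finset.sum_sub_distrib]
    ring
  -- Xt i is strongly measurable w.r.t. mXT
  have hXtsm : ∀ i, StronglyMeasurable[mXT] (Xt i) := fun i => by
    rw [hXt i]
    have hpair' : Measurable[mXT] (fun ω => (X ω, T ω)) := Measurable.of_comap_le le_rfl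
    have hX' : Measurable[mXT] (fun ω => X ω i) := by
      have h := ((EuclideanSpace.proj (𝕜 := ℝ) i).continuous.measurable).comp
        (measurable_fst.comp hpair')
      exact h
    exact hX'.stronglyMeasurable.sub ((stronglyMeasurable_condExp (m := mT)).mono hmT_le_XT)
  -- the error term integrates to zero against Xt i
  have hzero : ∀ i, ∫ ω, Xt i ω * ε ω ∂P = 0 := fun i => by
    have hint : Integrable (fun ω => Xt i ω * ε ω) P := integrable_mul_L2 (hXt2 i) hε2
    have hint' : Integrable ((Xt i) * ε) P := hint
    have hmul := condExp_mul_of_stronglyMeasurable_left (μ := P) (m := mXT) (hXtsm i) hint'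
      (hε2.integrable one_le_two)
    calc ∫ ω, Xt i ω * ε ω ∂P
        = ∫ ω, (P[(Xt i) * ε|mXT]) ω ∂P := (integral_condExp hmXT_le).symm
      _ = 0 := by
          rw [integral_congr_ae (hmul.trans ?_), integral_zero]
          filter_upwards [hεcond] with ω hω
          show Xt i ω * (P[ε|mXT]) ω = (0 : Ω → ℝ) ω
          rw [show (P[ε|mXT]) ω = 0 from hω]
          simp
  have hMij_int : ∀ i j, Integrable (fun ω => Xt i ω * Xt j ω) P :=
    fun i j => integrable_mul_L2 (hXt2 i) (hXt2 j)
  -- the main computation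
  have hvM : ∀ i, v i = ∑ j, M i j * β j := fun i => by
    have hv' : v i = ∫ ω, Xt i ω * Yt ω ∂P := by rw [hv]
    have h1 : ∫ ω, Xt i ω * Yt ω ∂P
        = ∫ ω, ((∑ j, β j * (Xt i ω * Xt j ω)) + Xt i ω * ε ω) ∂P := by
      refine integral_congr_ae ?_
      filter_upwards [hYt_ae] with ω hω
      rw [hω, mul_add, Finset.mul_sum]
      congr 1
      exact Finset.sum_congr rfl fun j _ => by ring
    have h2 : Integrable (fun ω => ∑ j, β j * (Xt i ω * Xt j ω)) P :=
      integrable_finset_sum _ fun j _ => ((hMij_int i j).const_mul (β j))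
    have h3 : Integrable (fun ω => Xt i ω * ε ω) P := integrable_mul_L2 (hXt2 i) hε2
    rw [hv', h1, integral_add h2 h3, hzero i, add_zero,
      integral_finset_sum _ fun j _ => ((hMij_int i j).const_mul (β j))]
    refine Finset.sum_congr rfl fun j _ => ?_
    rw [integral_const_mul, hM]
    simp [Matrix.of_apply, mul_comm]
  have part1 : v = M.mulVec (fun j => β j) := by
    funext i
    rw [hvM i]
    simp [Matrix.mulVec, dotProduct]
  refine ⟨part1, fun hU => ?_⟩
  rw [part1, Matrix.mulVec_mulVec, Matrix.nonsing_inv_mul M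
    ((Matrix.isUnit_iff_isUnit_det M).mp hU), Matrix.one_mulVec]
end
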